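/- There is a constant C > 0 such that for all sufficiently large n there exists a 3-edge-colouring of K_n with colours {1,2,3} that contains no rainbow triangle and in which every homogeneous set has size at most C·n^{1/3}·(log n)^2. -/

import Mathlib

open Finset


/-- A set `X` is homogeneous for a 3-edge-colouring `c` of `K_n`
if some colour does not appear on pairs of distinct elements of `X`. -/
def IsHomog {n : ℕ} (c : Sym2 (Fin n) → Fin 3) (X : Finset (Fin n)) : Prop :=
  ∃ i : Fin 3, ∀ x ∈ X, ∀ y ∈ X, x ≠ y → c s(x, y) ≠ i

/-- `c` contains a rainbow triangle: three vertices whose three pairs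
receive three pairwise distinct colours. -/
def HasRainbowTriangle {n : ℕ} (c : Sym2 (Fin n) → Fin 3) : Prop :=
  ∃ x y z : Fin n, x ≠ y ∧ y ≠ z ∧ x ≠ z ∧
    c s(x, y) ≠ c s(y, z) ∧ c s(y, z) ≠ c s(x, z) ∧ c s(x, y) ≠ c s(x, z)


lemma card_filter_forall_eq {A : Type*} [Fintype A] [DecidableEq A] (T : Finset A) (i : Fin 2) :
    ((univ : Finset (A → Fin 2)).filter (fun f => ∀ e ∈ T, f e = i)).card
      = 2 ^ (Fintype.card A - T.card) := by
  have e : {f : A → Fin 2 // ∀ e ∈ T, f e = i} ≃ ((Tᶜ : Finset A) → Fin 2) :=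
    { toFun := fun f x => f.1 x.1
      invFun := fun g => ⟨fun a => if h : a ∈ T then i else g ⟨a, Finset.mem_compl.mpr h⟩,
        fun e he => dif_pos he⟩
      left_inv := by
        intro f
        apply Subtype.ext
        funext a
        dsimp only
        split
        · exact (f.2 a ‹_›).symm
        · rfl
      right_inv := by
        intro g; funext x; dsimp only
        rw [dif_neg (Finset.mem_compl.mp x.2)]
    }
  have h1 : ((univ : Finset (A → Fin 2)).filter (fun f => ∀ e ∈ T, f e = i)).card
      = Fintype.card {f : A → Fin 2 // ∀ e ∈ T, f e = i} := (Fintype.card_subtype _).symm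
  rw [h1, Fintype.card_congr e, Fintype.card_fun, Fintype.card_fin, Fintype.card_coe,
    Finset.card_compl]

lemma ramsey (m : ℕ) (hm : 2 ≤ m) :
    ∃ d : Sym2 (Fin m) → Fin 2, ∀ S : Finset (Fin m), ∀ i : Fin 2,
      (∀ x ∈ S, ∀ y ∈ S, x ≠ y → d s(x, y) = i) → S.card ≤ 2 * Nat.clog 2 m + 1 := by
  classical
  set L := Nat.clog 2 m with hL
  set k := 2 * L + 2 with hk
  have hL1 : 1 ≤ L := by
    rw [hL]
    exact Nat.one_le_iff_ne_zero.mpr (by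
      intro h
      have := Nat.le_pow_clog (by norm_num : 1 < 2) m
      rw [h] at this
      omega)
  set N := Fintype.card (Sym2 (Fin m)) with hN
  set Bad : Finset (Sym2 (Fin m) → Fin 2) :=
    univ.filter (fun d => ∃ S : Finset (Fin m), S.card = k ∧ ∃ i : Fin 2,
      ∀ x ∈ S, ∀ y ∈ S, x ≠ y → d s(x, y) = i) with hBad
  have key : ∀ (S : Finset (Fin m)) (i : Fin 2), S.card = k →
      (univ.filter (fun d : Sym2 (Fin m) → Fin 2 =>
        ∀ x ∈ S, ∀ y ∈ S, x ≠ y → d s(x, y) = i)).card = 2 ^ (N - k.choose 2) := by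
    intro S i hS
    have hTcard : (S.offDiag.image (Function.uncurry Sym2.mk)).card = k.choose 2 := by
      rw [Sym2.card_image_offDiag, hS]
    have hfe : (univ.filter (fun d : Sym2 (Fin m) → Fin 2 =>
          ∀ x ∈ S, ∀ y ∈ S, x ≠ y → d s(x, y) = i))
        = (univ.filter (fun d : Sym2 (Fin m) → Fin 2 =>
          ∀ e ∈ S.offDiag.image (Function.uncurry Sym2.mk), d e = i)) := by
      apply Finset.filter_congr
      intro d _
      constructor
      · intro h e he
        simp only [mem_image, mem_offDiag] at he
        obtain ⟨⟨x, y⟩, ⟨hx, hy, hxy⟩, rfl⟩ := he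
        exact h x hx y hy hxy
      · intro h x hx y hy hxy
        exact h s(x, y) (mem_image.mpr ⟨(x, y), mem_offDiag.mpr ⟨hx, hy, hxy⟩, rfl⟩)
    rw [hfe, card_filter_forall_eq, hTcard]
  have hBadsub : Bad ⊆ ((univ.powersetCard k) ×ˢ (univ : Finset (Fin 2))).biUnion
      (fun p => univ.filter (fun d : Sym2 (Fin m) → Fin 2 =>
        ∀ x ∈ p.1, ∀ y ∈ p.1, x ≠ y → d s(x, y) = p.2)) := by
    intro d hd
    rw [hBad, mem_filter] at hd
    obtain ⟨-, S, hS, i, hmono⟩ := hd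
    refine mem_biUnion.mpr ⟨(S, i), ?_, ?_⟩
    · simp [Finset.mem_powersetCard_univ, hS]
    · simpa using hmono
  have hBadcard : Bad.card ≤ m.choose k * 2 * 2 ^ (N - k.choose 2) := by
    calc Bad.card ≤ ∑ p ∈ (univ.powersetCard k) ×ˢ (univ : Finset (Fin 2)),
        (univ.filter (fun d : Sym2 (Fin m) → Fin 2 =>
          ∀ x ∈ p.1, ∀ y ∈ p.1, x ≠ y → d s(x, y) = p.2)).card :=
        (card_le_card hBadsub).trans (card_biUnion_le)
      _ = ∑ p ∈ (univ.powersetCard k) ×ˢ (univ : Finset (Fin 2)),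
          2 ^ (N - k.choose 2) := by
          apply Finset.sum_congr rfl
          intro p hp
          rw [mem_product, Finset.mem_powersetCard_univ] at hp
          exact key p.1 p.2 hp.1
      _ = m.choose k * 2 * 2 ^ (N - k.choose 2) := by
          simp only [Finset.sum_const, smul_eq_mul, card_product,
            Finset.card_powersetCard, Finset.card_univ, Fintype.card_fin]
  have hnum : m.choose k * 2 < 2 ^ k.choose 2 := by
    have hck : k.choose 2 = (L + 1) * (2 * L + 1) := by
      rw [Nat.choose_two_right]
      have h2 : k - 1 = 2 * L + 1 := by omega
      rw [h2, hk]
      have h3 : (2 * L + 2) * (2 * L + 1) = (L + 1) * (2 * L + 1) * 2 := by ring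
      rw [h3, Nat.mul_div_cancel _ (by norm_num)]
    have h1 : m.choose k ≤ m ^ k := Nat.choose_le_pow m k
    have h2 : m ^ k ≤ (2 ^ L) ^ k :=
      Nat.pow_le_pow_left (Nat.le_pow_clog (by norm_num) m) k
    have h3 : (2 ^ L) ^ k * 2 = 2 ^ (L * k + 1) := by
      rw [← pow_mul, pow_succ]
    have h4 : L * k + 1 < k.choose 2 := by
      rw [hck, hk]
      nlinarith [hL1]
    calc m.choose k * 2 ≤ (2 ^ L) ^ k * 2 := by
          exact Nat.mul_le_mul_right 2 (h1.trans h2)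
      _ = 2 ^ (L * k + 1) := h3
      _ < 2 ^ k.choose 2 := Nat.pow_lt_pow_right (by norm_num) h4
  -- find a good colouring
  have hlt : Bad.card < 2 ^ N := by
    rcases Nat.eq_zero_or_pos (m.choose k) with h0 | hpos
    · rw [h0] at hBadcard
      simp only [Nat.zero_mul, Nat.mul_zero, zero_mul, Nat.le_zero] at hBadcard
      rw [hBadcard]
      positivity
    · have hkm : k ≤ m := by
        by_contra h
        push_neg at h
        rw [Nat.choose_eq_zero_of_lt h] at hpos
        exact lt_irrefl 0 hpos
      have hcN : k.choose 2 ≤ N := by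
        rw [hN, Sym2.card, Fintype.card_fin]
        calc k.choose 2 ≤ m.choose 2 := Nat.choose_le_choose 2 hkm
          _ ≤ (m + 1).choose 2 := Nat.choose_le_choose 2 (Nat.le_succ m)
      calc Bad.card ≤ m.choose k * 2 * 2 ^ (N - k.choose 2) := hBadcard
        _ < 2 ^ k.choose 2 * 2 ^ (N - k.choose 2) :=
            (Nat.mul_lt_mul_right (by positivity)).mpr hnum
        _ = 2 ^ N := by rw [← pow_add]; congr 1; omega
  have : ∃ d : Sym2 (Fin m) → Fin 2, d ∉ Bad := by
    by_contra h
    push_neg at h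
    have : Bad = univ := Finset.eq_univ_iff_forall.mpr h
    rw [this, Finset.card_univ, Fintype.card_fun, Fintype.card_fin, ← hN] at hlt
    exact lt_irrefl _ hlt
  obtain ⟨d, hd⟩ := this
  refine ⟨d, fun S i hmono => ?_⟩
  by_contra hcard
  push_neg at hcard
  obtain ⟨S', hS'sub, hS'⟩ := Finset.exists_subset_card_eq (s := S) (n := k) (by omega)
  exact hd (mem_filter.mpr ⟨mem_univ d, S', hS', i,
    fun x hx y hy hxy => hmono x (hS'sub hx) y (hS'sub hy) hxy⟩)

private def E1 : Fin 2 → Fin 3 := ![0, 1]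
private def E2 : Fin 2 → Fin 3 := ![1, 2]
private def E3 : Fin 2 → Fin 3 := ![2, 0]

private lemma pigeon (e : Fin 2 → Fin 3) (a b c : Fin 2) :
    e a = e b ∨ e b = e c ∨ e a = e c := by
  have h : a = b ∨ b = c ∨ a = c := by revert a b c; decide
  rcases h with h | h | h
  · exact Or.inl (congrArg e h)
  · exact Or.inr (Or.inl (congrArg e h))
  · exact Or.inr (Or.inr (congrArg e h))

variable {m : ℕ}

private def Fc (d1 d2 d3 : Sym2 (Fin m) → Fin 2)
    (p q : Fin m × Fin m × Fin m) : Fin 3 :=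
  if p.1 = q.1 then
    (if p.2.1 = q.2.1 then E3 (d3 s(p.2.2, q.2.2)) else E2 (d2 s(p.2.1, q.2.1)))
  else E1 (d1 s(p.1, q.1))

private lemma Fc_symm (d1 d2 d3 : Sym2 (Fin m) → Fin 2) (p q : Fin m × Fin m × Fin m) :
    Fc d1 d2 d3 p q = Fc d1 d2 d3 q p := by
  unfold Fc
  rcases eq_or_ne p.1 q.1 with h1 | h1
  · rw [if_pos h1, if_pos h1.symm]
    rcases eq_or_ne p.2.1 q.2.1 with h2 | h2
    · rw [if_pos h2, if_pos h2.symm, Sym2.eq_swap]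
    · rw [if_neg h2, if_neg (Ne.symm h2), Sym2.eq_swap]
  · rw [if_neg h1, if_neg (Ne.symm h1), Sym2.eq_swap]

private lemma Fc_key (d1 d2 d3 : Sym2 (Fin m) → Fin 2) (p q r : Fin m × Fin m × Fin m) :
    Fc d1 d2 d3 p q = Fc d1 d2 d3 q r ∨ Fc d1 d2 d3 q r = Fc d1 d2 d3 p r ∨
      Fc d1 d2 d3 p q = Fc d1 d2 d3 p r := by
  unfold Fc
  rcases eq_or_ne p.1 q.1 with h1 | h1 <;> rcases eq_or_ne q.1 r.1 with h2 | h2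
  · -- first coords all equal
    have h3 : p.1 = r.1 := h1.trans h2
    rw [if_pos h1, if_pos h2, if_pos h3]
    rcases eq_or_ne p.2.1 q.2.1 with g1 | g1 <;> rcases eq_or_ne q.2.1 r.2.1 with g2 | g2
    · have g3 : p.2.1 = r.2.1 := g1.trans g2
      rw [if_pos g1, if_pos g2, if_pos g3]
      exact pigeon E3 _ _ _
    · -- p2 = q2, q2 ≠ r2, so p2 ≠ r2
      have g3 : p.2.1 ≠ r.2.1 := g1 ▸ g2
      rw [if_pos g1, if_neg g2, if_neg g3, g1]
      exact Or.inr (Or.inl rfl)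
    · have g3 : p.2.1 ≠ r.2.1 := fun h => g1 (h.trans g2.symm)
      rw [if_neg g1, if_pos g2, if_neg g3, g2]
      exact Or.inr (Or.inr rfl)
    · rcases eq_or_ne p.2.1 r.2.1 with g3 | g3
      · rw [if_neg g1, if_neg g2, ← g3, Sym2.eq_swap (a := q.2.1)]
        exact Or.inl rfl
      · rw [if_neg g1, if_neg g2, if_neg g3]
        exact pigeon E2 _ _ _
  · have h3 : p.1 ≠ r.1 := h1 ▸ h2
    rw [if_pos h1, if_neg h2, if_neg h3, h1]
    exact Or.inr (Or.inl rfl)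
  · have h3 : p.1 ≠ r.1 := fun h => h1 (h.trans h2.symm)
    rw [if_neg h1, if_pos h2, if_neg h3, h2]
    exact Or.inr (Or.inr rfl)
  · rcases eq_or_ne p.1 r.1 with h3 | h3
    · rw [if_neg h1, if_neg h2, ← h3, Sym2.eq_swap (a := q.1)]
      exact Or.inl rfl
    · rw [if_neg h1, if_neg h2, if_neg h3]
      exact pigeon E1 _ _ _

private lemma count3 {n : ℕ} (X : Finset (Fin n)) (f1 f2 f3 : Fin n → Fin m)
    (A1 A2 A3 : ℕ)
    (h1 : (X.image f1).card ≤ A1)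
    (h2 : ∀ a : Fin m, ((X.filter (fun x => f1 x = a)).image f2).card ≤ A2)
    (h3 : ∀ a b : Fin m,
      ((X.filter (fun x => f1 x = a)).filter (fun x => f2 x = b)).card ≤ A3) :
    X.card ≤ A1 * A2 * A3 := by
  classical
  calc X.card ≤ A3 * A2 * (X.image f1).card := by
        apply Finset.card_le_mul_card_image
        intro a _
        calc (X.filter (fun x => f1 x = a)).card
            ≤ A3 * ((X.filter (fun x => f1 x = a)).image f2).card :=
              Finset.card_le_mul_card_image _ A3 (fun b _ => h3 a b)
          _ ≤ A3 * A2 := Nat.mul_le_mul_left A3 (h2 a)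
    _ ≤ A3 * A2 * A1 := Nat.mul_le_mul_left _ h1
    _ = A1 * A2 * A3 := by ring

lemma construction (n m : ℕ) (hm : 2 ≤ m) (hnm : n ≤ m ^ 3) :
    ∃ c : Sym2 (Fin n) → Fin 3, ¬ HasRainbowTriangle c ∧
      ∀ X : Finset (Fin n), IsHomog c X →
        X.card ≤ m * (2 * Nat.clog 2 m + 1) ^ 2 := by
  classical
  obtain ⟨d1, hd1⟩ := ramsey m hm
  obtain ⟨d2, hd2⟩ := ramsey m hm
  obtain ⟨d3, hd3⟩ := ramsey m hm
  set B := 2 * Nat.clog 2 m + 1 with hB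
  have hcard : Fintype.card (Fin n) ≤ Fintype.card (Fin m × Fin m × Fin m) := by
    simp only [Fintype.card_prod, Fintype.card_fin]
    calc n ≤ m ^ 3 := hnm
      _ = m * (m * m) := by ring
  obtain ⟨P⟩ : Nonempty (Fin n ↪ Fin m × Fin m × Fin m) :=
    Function.Embedding.nonempty_of_card_le hcard
  refine ⟨Sym2.lift ⟨fun u v => Fc d1 d2 d3 (P u) (P v),
    fun u v => Fc_symm d1 d2 d3 (P u) (P v)⟩, ?_, ?_⟩
  · rintro ⟨x, y, z, hxy, hyz, hxz, h1, h2, h3⟩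
    simp only [Sym2.lift_mk] at h1 h2 h3
    rcases Fc_key d1 d2 d3 (P x) (P y) (P z) with h | h | h
    · exact h1 h
    · exact h2 h
    · exact h3 h
  · rintro X ⟨i, hi⟩
    have hc : ∀ x y : Fin n, (Sym2.lift ⟨fun u v => Fc d1 d2 d3 (P u) (P v),
        fun u v => Fc_symm d1 d2 d3 (P u) (P v)⟩) s(x, y) = Fc d1 d2 d3 (P x) (P y) :=
      fun x y => Sym2.lift_mk _ x y
    simp only [hc] at hi
    set f1 : Fin n → Fin m := fun x => (P x).1 with hf1
    set f2 : Fin n → Fin m := fun x => (P x).2.1 with hf2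
    set f3 : Fin n → Fin m := fun x => (P x).2.2 with hf3
    -- generic facts
    -- coordinate 1 clique
    have trivbound : ∀ (Y : Finset (Fin n)) (g : Fin n → Fin m), (Y.image g).card ≤ m := by
      intro Y g
      simpa using Finset.card_le_univ (Y.image g)
    have c1 : ∀ j : Fin 2, (∀ v : Fin 2, E1 v ≠ i → v = j) → (X.image f1).card ≤ B := by
      intro j hj
      apply hd1 (X.image f1) j
      intro a ha b hb hab
      obtain ⟨x, hx, rfl⟩ := Finset.mem_image.mp ha
      obtain ⟨y, hy, rfl⟩ := Finset.mem_image.mp hb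
      have hxy : x ≠ y := fun h => hab (congrArg f1 h)
      have hne := hi x hx y hy hxy
      rw [show Fc d1 d2 d3 (P x) (P y) = E1 (d1 s(f1 x, f1 y)) from if_neg hab] at hne
      exact hj _ hne
    have c2 : ∀ j : Fin 2, (∀ v : Fin 2, E2 v ≠ i → v = j) → ∀ a : Fin m,
        ((X.filter (fun x => f1 x = a)).image f2).card ≤ B := by
      intro j hj a
      apply hd2 _ j
      intro b hb c hc hbc
      obtain ⟨x, hx, rfl⟩ := Finset.mem_image.mp hb
      obtain ⟨y, hy, rfl⟩ := Finset.mem_image.mp hc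
      rw [Finset.mem_filter] at hx hy
      have hxy : x ≠ y := fun h => hbc (congrArg f2 h)
      have hne := hi x hx.1 y hy.1 hxy
      have hff : f1 x = f1 y := hx.2.trans hy.2.symm
      rw [show Fc d1 d2 d3 (P x) (P y) = E2 (d2 s(f2 x, f2 y)) by
        unfold Fc; rw [if_pos hff, if_neg hbc]] at hne
      exact hj _ hne
    have c3 : ∀ j : Fin 2, (∀ v : Fin 2, E3 v ≠ i → v = j) → ∀ a b : Fin m,
        ((X.filter (fun x => f1 x = a)).filter (fun x => f2 x = b)).card ≤ B := by
      intro j hj a b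
      set Y := (X.filter (fun x => f1 x = a)).filter (fun x => f2 x = b) with hY
      have hinj : Set.InjOn f3 Y := by
        intro x hx y hy hf
        simp only [hY, Finset.mem_coe, Finset.mem_filter] at hx hy
        apply P.injective
        have e1 : f1 x = f1 y := hx.1.2.trans hy.1.2.symm
        have e2 : f2 x = f2 y := hx.2.trans hy.2.symm
        exact Prod.ext e1 (Prod.ext e2 hf)
      rw [← Finset.card_image_of_injOn hinj]
      apply hd3 _ j
      intro u hu v hv huv
      obtain ⟨x, hx, rfl⟩ := Finset.mem_image.mp hu
      obtain ⟨y, hy, rfl⟩ := Finset.mem_image.mp hv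
      rw [hY, Finset.mem_filter, Finset.mem_filter] at hx hy
      have hxy : x ≠ y := fun h => huv (congrArg f3 h)
      have hne := hi x hx.1.1 y hy.1.1 hxy
      have e1 : f1 x = f1 y := hx.1.2.trans hy.1.2.symm
      have e2 : f2 x = f2 y := hx.2.trans hy.2.symm
      rw [show Fc d1 d2 d3 (P x) (P y) = E3 (d3 s(f3 x, f3 y)) by
        unfold Fc; rw [if_pos e1, if_pos e2]] at hne
      exact hj _ hne
    have hBm : B * B ≤ B * B := le_rfl
    fin_cases i
    · -- colour 0 : coord1 constrained (d1 = 1), coord2 free, coord3 constrained (d3 = 0)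
      have := count3 X f1 f2 f3 B m B
        (c1 1 (by decide)) (fun a => trivbound _ _) (c3 0 (by decide))
      calc X.card ≤ B * m * B := this
        _ = m * B ^ 2 := by ring
    · have := count3 X f1 f2 f3 B B m
        (c1 0 (by decide)) (c2 1 (by decide)) (fun a b => ?_)
      · calc X.card ≤ B * B * m := this
          _ = m * B ^ 2 := by ring
      · set Y := (X.filter (fun x => f1 x = a)).filter (fun x => f2 x = b) with hY
        have hinj : Set.InjOn f3 Y := by
          intro x hx y hy hf
          simp only [hY, Finset.mem_coe, Finset.mem_filter] at hx hy
          apply P.injective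
          have e1 : f1 x = f1 y := hx.1.2.trans hy.1.2.symm
          have e2 : f2 x = f2 y := hx.2.trans hy.2.symm
          exact Prod.ext e1 (Prod.ext e2 hf)
        rw [← Finset.card_image_of_injOn hinj]
        exact trivbound _ _
    · have := count3 X f1 f2 f3 m B B
        (trivbound _ _) (c2 0 (by decide)) (c3 1 (by decide))
      calc X.card ≤ m * B * B := this
        _ = m * B ^ 2 := by ring

theorem stmt6 :
    ∃ C : ℝ, 0 < C ∧ ∃ N : ℕ, ∀ n : ℕ, N ≤ n →
      ∃ c : Sym2 (Fin n) → Fin 3, ¬ HasRainbowTriangle c ∧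
        ∀ X : Finset (Fin n), IsHomog c X →
          (X.card : ℝ) ≤ C * (n : ℝ) ^ ((1 : ℝ) / 3) * (Real.logb 2 n) ^ 2 := by
  refine ⟨2, by norm_num, 32768, fun n hn => ?_⟩
  have hn1 : (1 : ℝ) ≤ (n : ℝ) := by
    have h : (1 : ℕ) ≤ n := by omega
    exact_mod_cast h
  have hn8 : (8 : ℝ) ≤ (n : ℝ) := by
    have h : (8 : ℕ) ≤ n := by omega
    exact_mod_cast h
  set t : ℝ := (n : ℝ) ^ ((1 : ℝ) / 3) with ht
  have ht0 : 0 ≤ t := Real.rpow_nonneg (by positivity) _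
  have h8 : ((8 : ℝ)) ^ ((1 : ℝ) / 3) = 2 := by
    rw [show (8 : ℝ) = 2 ^ (3 : ℕ) by norm_num, ← Real.rpow_natCast 2 3,
      ← Real.rpow_mul (by norm_num)]
    norm_num
  have ht2 : 2 ≤ t := by
    rw [← h8, ht]
    exact Real.rpow_le_rpow (by norm_num) hn8 (by norm_num)
  set m : ℕ := ⌈t⌉₊ with hmdef
  have hm2 : 2 ≤ m := by
    have : (1 : ℕ) < ⌈t⌉₊ := Nat.lt_ceil.mpr (by push_cast; linarith)
    omega
  have htm : t ≤ (m : ℝ) := Nat.le_ceil t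
  have hmt : (m : ℝ) ≤ 2 * t := by
    have := Nat.ceil_lt_add_one ht0
    rw [← hmdef] at this
    linarith
  have ht3 : t ^ (3 : ℕ) = (n : ℝ) := by
    rw [ht, ← Real.rpow_natCast ((n : ℝ) ^ ((1 : ℝ) / 3)) 3, ← Real.rpow_mul (by positivity)]
    norm_num
  have hnm : n ≤ m ^ 3 := by
    have : (n : ℝ) ≤ (m : ℝ) ^ (3 : ℕ) := by
      rw [← ht3]
      exact pow_le_pow_left₀ ht0 htm 3
    exact_mod_cast this
  obtain ⟨c, hcr, hch⟩ := construction n m hm2 hnm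
  refine ⟨c, hcr, fun X hX => ?_⟩
  set L := Nat.clog 2 m with hL
  set B := 2 * L + 1 with hBd
  -- bound B by logb
  have hL1 : 1 ≤ L := by
    by_contra h
    push_neg at h
    have h0 : L = 0 := by omega
    have h2 := Nat.le_pow_clog (by norm_num : 1 < 2) m
    rw [← hL, h0, pow_zero] at h2
    omega
  have hpow : (2 : ℕ) ^ (L - 1) < m := by
    have := Nat.pow_pred_clog_lt_self (by norm_num : 1 < 2) (by omega : 1 < m)
    simpa [Nat.pred_eq_sub_one, ← hL] using this
  have hlogt : Real.logb 2 t = (1 / 3) * Real.logb 2 (n : ℝ) := by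
    rw [ht, Real.logb_rpow_eq_mul_logb_of_pos (by positivity)]
  have h15 : (15 : ℝ) ≤ Real.logb 2 (n : ℝ) := by
    have : ((32768 : ℕ) : ℝ) ≤ (n : ℝ) := by exact_mod_cast hn
    have h2 : Real.logb 2 ((32768 : ℕ) : ℝ) ≤ Real.logb 2 (n : ℝ) :=
      Real.logb_le_logb_of_le (by norm_num) (by norm_num) this
    have h3 : Real.logb 2 ((32768 : ℕ) : ℝ) = 15 := by
      rw [show ((32768 : ℕ) : ℝ) = 2 ^ (15 : ℕ) by norm_num, Real.logb_pow,
        Real.logb_self_eq_one (by norm_num)]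
      norm_num
    linarith
  have hBlog : (B : ℝ) ≤ Real.logb 2 (n : ℝ) := by
    have hcast : (2 : ℝ) ^ (L - 1 : ℕ) < (m : ℝ) := by exact_mod_cast hpow
    have hlt : ((L : ℝ) - 1) < Real.logb 2 (2 * t) := by
      have h1 : Real.logb 2 ((2 : ℝ) ^ (L - 1 : ℕ)) < Real.logb 2 (2 * t) := by
        apply Real.logb_lt_logb (by norm_num) (by positivity)
        calc (2 : ℝ) ^ (L - 1 : ℕ) < (m : ℝ) := hcast
          _ ≤ 2 * t := hmt
      have h2 : Real.logb 2 ((2 : ℝ) ^ (L - 1 : ℕ)) = ((L - 1 : ℕ) : ℝ) := by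
        rw [Real.logb_pow, Real.logb_self_eq_one (by norm_num)]
        ring
      rw [h2] at h1
      have h3 : ((L - 1 : ℕ) : ℝ) = (L : ℝ) - 1 := by
        have : (1 : ℕ) ≤ L := hL1
        push_cast [this]
        ring
      linarith [h3 ▸ h1]
    have hlog2t : Real.logb 2 (2 * t) = 1 + (1 / 3) * Real.logb 2 (n : ℝ) := by
      rw [Real.logb_mul (by norm_num) (by positivity), Real.logb_self_eq_one (by norm_num),
        hlogt]
    rw [hlog2t] at hlt
    have : (B : ℝ) = 2 * (L : ℝ) + 1 := by push_cast [hBd]; ring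
    rw [this]
    linarith
  -- combine
  have hX' := hch X hX
  have hXr : (X.card : ℝ) ≤ (m : ℝ) * (B : ℝ) ^ 2 := by exact_mod_cast hX'
  have hB0 : (0 : ℝ) ≤ (B : ℝ) := by positivity
  calc (X.card : ℝ) ≤ (m : ℝ) * (B : ℝ) ^ 2 := hXr
    _ ≤ (2 * t) * (Real.logb 2 (n : ℝ)) ^ 2 := by
        apply mul_le_mul hmt ?_ (by positivity) (by linarith)
        exact pow_le_pow_left₀ hB0 hBlog 2
    _ = 2 * t * (Real.logb 2 (n : ℝ)) ^ 2 := by ring
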